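/- Optimality certificate for the regularized SDP: let A, B_1, …, B_m be symmetric real n×n matrices, b ∈ ℝ^m, γ > 0, and let {1,…,m} be partitioned into index sets I_eq and I_in. Suppose u ∈ ℝ^m satisfies u_i ≥ 0 for all i ∈ I_in, and set X := γ Π(C(u)) with C(u) = −A − Σ_{i=1}^m u_i B_i, where Π denotes the metric projection onto the PSD cone. If X satisfies ⟨B_i, X⟩ = b_i for all i ∈ I_eq and ⟨B_i, X⟩ ≤ b_i for all i ∈ I_in, and the complementary slackness condition Σ_{i=1}^m u_i(⟨B_i, X⟩ − b_i) = 0 holds, then d_γ(u) = p_γ(X), and consequently X minimizes p_γ(Y) = ⟨A, Y⟩ + (1/(2γ))‖Y‖²_F over all PSD matrices Y satisfying ⟨B_i, Y⟩ = b_i for i ∈ I_eq and ⟨B_i, Y⟩ ≤ b_i for i ∈ I_in, and u maximizes d_γ over the dual feasible set. -/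

import Mathlib

open Matrix

/-- Frobenius (trace) inner product of two real `n × n` matrices. -/
noncomputable def frobInner {n : ℕ} (A B : Matrix (Fin n) (Fin n) ℝ) : ℝ :=
  (Aᵀ * B).trace

/-- Squared Frobenius norm of a real `n × n` matrix. -/
noncomputable def frobNormSq {n : ℕ} (X : Matrix (Fin n) (Fin n) ℝ) : ℝ :=
  (Xᵀ * X).trace

/-- Frobenius norm of a real `n × n` matrix. -/
noncomputable def frobNorm {n : ℕ} (X : Matrix (Fin n) (Fin n) ℝ) : ℝ :=
  Real.sqrt (frobNormSq X)

/-- `proj` is the metric projection onto the PSD cone: for every symmetric `X`,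
`proj X` is PSD and is nearest to `X` in Frobenius norm among all PSD matrices. -/
def IsPSDProjection {n : ℕ}
    (proj : Matrix (Fin n) (Fin n) ℝ → Matrix (Fin n) (Fin n) ℝ) : Prop :=
  ∀ X : Matrix (Fin n) (Fin n) ℝ, X.IsSymm →
    (proj X).PosSemidef ∧
      ∀ Y : Matrix (Fin n) (Fin n) ℝ, Y.PosSemidef →
        frobNorm (proj X - X) ≤ frobNorm (Y - X)

/-- `C(u) = −A − Σᵢ uᵢ Bᵢ`. -/
noncomputable def Cmat {n m : ℕ} (A : Matrix (Fin n) (Fin n) ℝ)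
    (B : Fin m → Matrix (Fin n) (Fin n) ℝ) (u : Fin m → ℝ) :
    Matrix (Fin n) (Fin n) ℝ :=
  -A - ∑ i, u i • B i

/-- `d_γ(u) = −uᵀb − (γ/2)‖Π(C(u))‖²_F`. -/
noncomputable def dualObj {n m : ℕ} (A : Matrix (Fin n) (Fin n) ℝ)
    (B : Fin m → Matrix (Fin n) (Fin n) ℝ) (b : Fin m → ℝ) (γ : ℝ)
    (proj : Matrix (Fin n) (Fin n) ℝ → Matrix (Fin n) (Fin n) ℝ)
    (u : Fin m → ℝ) : ℝ :=
  -(∑ i, u i * b i) - (γ / 2) * frobNormSq (proj (Cmat A B u))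


lemma frobInner_comm {n : ℕ} (A B : Matrix (Fin n) (Fin n) ℝ) : frobInner A B = frobInner B A := by
  unfold frobInner
  rw [← Matrix.trace_transpose, Matrix.transpose_mul, Matrix.transpose_transpose]
lemma frobInner_add_left {n : ℕ} (A B C : Matrix (Fin n) (Fin n) ℝ) :
    frobInner (A + B) C = frobInner A C + frobInner B C := by
  simp [frobInner, Matrix.transpose_add, Matrix.add_mul]
lemma frobInner_smul_left {n : ℕ} (c : ℝ) (A B : Matrix (Fin n) (Fin n) ℝ) :
    frobInner (c • A) B = c * frobInner A B := by
  simp [frobInner, Matrix.transpose_smul, Matrix.smul_mul]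
lemma frobInner_sub_left {n : ℕ} (A B C : Matrix (Fin n) (Fin n) ℝ) :
    frobInner (A - B) C = frobInner A C - frobInner B C := by
  simp [frobInner, Matrix.transpose_sub, Matrix.sub_mul]
lemma frobInner_neg_left {n : ℕ} (A B : Matrix (Fin n) (Fin n) ℝ) :
    frobInner (-A) B = -frobInner A B := by
  simp [frobInner, Matrix.transpose_neg, Matrix.neg_mul]
lemma frobInner_zero_right {n : ℕ} (A : Matrix (Fin n) (Fin n) ℝ) : frobInner A 0 = 0 := by
  simp [frobInner]
lemma frobInner_sum_left {n k : ℕ} (f : Fin k → Matrix (Fin n) (Fin n) ℝ) (C : Matrix (Fin n) (Fin n) ℝ) :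
    frobInner (∑ i, f i) C = ∑ i, frobInner (f i) C := by
  simp [frobInner, Matrix.transpose_sum, Finset.sum_mul, Matrix.trace_sum]
lemma frobInner_add_right {n : ℕ} (A B C : Matrix (Fin n) (Fin n) ℝ) :
    frobInner A (B + C) = frobInner A B + frobInner A C := by
  rw [frobInner_comm, frobInner_add_left, frobInner_comm B, frobInner_comm C]
lemma frobInner_smul_right {n : ℕ} (c : ℝ) (A B : Matrix (Fin n) (Fin n) ℝ) :
    frobInner A (c • B) = c * frobInner A B := by
  rw [frobInner_comm, frobInner_smul_left, frobInner_comm]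
lemma frobInner_sub_right {n : ℕ} (A B C : Matrix (Fin n) (Fin n) ℝ) :
    frobInner A (B - C) = frobInner A B - frobInner A C := by
  rw [frobInner_comm, frobInner_sub_left, frobInner_comm B, frobInner_comm C]
lemma frobNormSq_eq_inner {n : ℕ} (X : Matrix (Fin n) (Fin n) ℝ) : frobNormSq X = frobInner X X := rfl
lemma frobInner_eq_sum {n : ℕ} (A B : Matrix (Fin n) (Fin n) ℝ) :
    frobInner A B = ∑ j, ∑ i, A i j * B i j := by
  simp [frobInner, Matrix.trace, Matrix.diag, Matrix.mul_apply, Matrix.transpose_apply]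
lemma frobNormSq_nonneg {n : ℕ} (X : Matrix (Fin n) (Fin n) ℝ) : 0 ≤ frobNormSq X := by
  rw [frobNormSq_eq_inner, frobInner_eq_sum]
  refine Finset.sum_nonneg fun j _ => Finset.sum_nonneg fun i _ => mul_self_nonneg _
lemma frobNormSq_add {n : ℕ} (P Q : Matrix (Fin n) (Fin n) ℝ) :
    frobNormSq (P + Q) = frobNormSq P + 2 * frobInner P Q + frobNormSq Q := by
  rw [frobNormSq_eq_inner, frobNormSq_eq_inner, frobNormSq_eq_inner, frobInner_add_left,
    frobInner_add_right, frobInner_add_right, frobInner_comm Q P]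
  ring
lemma frobNormSq_smul {n : ℕ} (c : ℝ) (X : Matrix (Fin n) (Fin n) ℝ) :
    frobNormSq (c • X) = c ^ 2 * frobNormSq X := by
  rw [frobNormSq_eq_inner, frobNormSq_eq_inner, frobInner_smul_left, frobInner_smul_right]
  ring
lemma psd_smul {n : ℕ} {M : Matrix (Fin n) (Fin n) ℝ} (h : M.PosSemidef) {c : ℝ} (hc : 0 ≤ c) :
    (c • M).PosSemidef := by
  constructor
  · unfold Matrix.IsHermitian
    rw [Matrix.conjTranspose_smul, h.1]
    simp
  · intro x
    exact (Matrix.PosSemidef.smul h hc).2 x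
lemma psd_zero {n : ℕ} : (0 : Matrix (Fin n) (Fin n) ℝ).PosSemidef := by
  constructor
  · simp [Matrix.IsHermitian]
  · intro x; simp

lemma proj_vi {n : ℕ} {proj : Matrix (Fin n) (Fin n) ℝ → Matrix (Fin n) (Fin n) ℝ}
    (hproj : IsPSDProjection proj) {C : Matrix (Fin n) (Fin n) ℝ} (hC : C.IsSymm)
    {Y : Matrix (Fin n) (Fin n) ℝ} (hY : Y.PosSemidef) :
    0 ≤ frobInner (proj C - C) (Y - proj C) := by
  obtain ⟨hP, hmin⟩ := hproj C hC
  set P := proj C with hPdef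
  by_contra hneg
  push_neg at hneg
  set s := frobInner (P - C) (Y - P) with hs
  set q := frobNormSq (Y - P) with hq
  have hq0 : 0 ≤ q := frobNormSq_nonneg _
  have key : ∀ t : ℝ, 0 < t → t ≤ 1 → 0 ≤ 2 * t * s + t ^ 2 * q := by
    intro t ht0 ht1
    have hZ : ((1 - t) • P + t • Y).PosSemidef :=
      (psd_smul hP (by linarith)).add (psd_smul hY ht0.le)
    have h2 := hmin _ hZ
    have hd : (1 - t) • P + t • Y - C = (P - C) + t • (Y - P) := by module
    have hnn : 0 ≤ frobNormSq (P - C) := frobNormSq_nonneg _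
    have hnn2 : 0 ≤ frobNormSq ((1 - t) • P + t • Y - C) := frobNormSq_nonneg _
    have hsq : frobNormSq (P - C) ≤ frobNormSq ((1 - t) • P + t • Y - C) := by
      calc frobNormSq (P - C) = Real.sqrt (frobNormSq (P - C)) ^ 2 := (Real.sq_sqrt hnn).symm
        _ ≤ Real.sqrt (frobNormSq ((1 - t) • P + t • Y - C)) ^ 2 :=
            pow_le_pow_left₀ (Real.sqrt_nonneg _) h2 2
        _ = _ := Real.sq_sqrt hnn2
    rw [hd, frobNormSq_add, frobInner_smul_right, frobNormSq_smul] at hsq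
    rw [← hs, ← hq] at hsq
    nlinarith [hsq]
  rcases eq_or_lt_of_le hq0 with hq' | hq'
  · have h1 := key 1 one_pos le_rfl
    nlinarith [h1]
  · set t := min 1 (-s / q) with ht
    have ht0 : 0 < t := lt_min one_pos (div_pos (neg_pos.2 hneg) hq')
    have ht1 : t ≤ 1 := min_le_left _ _
    have htq : t * q ≤ -s := by
      have h₂ : t ≤ -s / q := min_le_right _ _
      calc t * q ≤ (-s / q) * q := mul_le_mul_of_nonneg_right h₂ hq0
        _ = -s := div_mul_cancel₀ _ (ne_of_gt hq')
    have h1 := key t ht0 ht1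
    nlinarith [h1, htq, mul_le_mul_of_nonneg_left htq ht0.le]


/-- Optimality certificate for the regularized SDP: if `u` is dual feasible,
`X = γ Π(C(u))` is primal feasible, and complementary slackness holds, then
`d_γ(u) = p_γ(X)`; consequently `X` minimizes `p_γ` over the primal feasible set and
`u` maximizes `d_γ` over the dual feasible set. -/
theorem stmt_16 (n m : ℕ) (A : Matrix (Fin n) (Fin n) ℝ) (hA : A.IsSymm)
    (B : Fin m → Matrix (Fin n) (Fin n) ℝ) (hB : ∀ i, (B i).IsSymm)
    (b : Fin m → ℝ) (γ : ℝ) (hγ : 0 < γ)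
    (Ieq Iin : Set (Fin m)) (hunion : Ieq ∪ Iin = Set.univ) (hdisj : Disjoint Ieq Iin)
    (proj : Matrix (Fin n) (Fin n) ℝ → Matrix (Fin n) (Fin n) ℝ)
    (hproj : IsPSDProjection proj)
    (u : Fin m → ℝ) (hu : ∀ i ∈ Iin, 0 ≤ u i)
    (X : Matrix (Fin n) (Fin n) ℝ) (hXdef : X = γ • proj (Cmat A B u))
    (heq : ∀ i ∈ Ieq, frobInner (B i) X = b i)
    (hin : ∀ i ∈ Iin, frobInner (B i) X ≤ b i)
    (hcs : ∑ i, u i * (frobInner (B i) X - b i) = 0) :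
    dualObj A B b γ proj u = frobInner A X + (1 / (2 * γ)) * frobNormSq X ∧
      (∀ Y : Matrix (Fin n) (Fin n) ℝ, Y.PosSemidef →
        (∀ i ∈ Ieq, frobInner (B i) Y = b i) →
        (∀ i ∈ Iin, frobInner (B i) Y ≤ b i) →
        frobInner A X + (1 / (2 * γ)) * frobNormSq X ≤
          frobInner A Y + (1 / (2 * γ)) * frobNormSq Y) ∧
      (∀ v : Fin m → ℝ, (∀ i ∈ Iin, 0 ≤ v i) →
        dualObj A B b γ proj v ≤ dualObj A B b γ proj u) := by
  
  classical
  -- symmetry of C(w)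
  have hCsymm : ∀ w : Fin m → ℝ, (Cmat A B w).IsSymm := by
    intro w
    unfold Cmat Matrix.IsSymm
    rw [Matrix.transpose_sub, Matrix.transpose_neg, hA, Matrix.transpose_sum]
    have h : ∀ i : Fin m, (w i • B i)ᵀ = w i • B i := fun i => by
      rw [Matrix.transpose_smul, hB i]
    rw [Finset.sum_congr rfl fun i _ => h i]
  set P := proj (Cmat A B u) with hPdef
  obtain ⟨hP, _⟩ := hproj _ (hCsymm u)
  -- inner-product identity for A against anything
  have hAZ : ∀ (w : Fin m → ℝ) (Z : Matrix (Fin n) (Fin n) ℝ),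
      frobInner A Z = -frobInner (Cmat A B w) Z - ∑ i, w i * frobInner (B i) Z := by
    intro w Z
    unfold Cmat
    rw [frobInner_sub_left, frobInner_neg_left]
    rw [frobInner_sum_left]
    have : ∀ i, frobInner (w i • B i) Z = w i * frobInner (B i) Z :=
      fun i => frobInner_smul_left _ _ _
    rw [Finset.sum_congr rfl fun i _ => this i]
    ring
  -- orthogonality: ⟨P - C(u), P⟩ = 0
  have horth : frobInner (P - Cmat A B u) P = 0 := by
    have h2P := proj_vi hproj (hCsymm u) (psd_smul hP (by norm_num : (0:ℝ) ≤ 2))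
    have h0 := proj_vi hproj (hCsymm u) (psd_zero (n := n))
    rw [← hPdef] at h2P h0
    have e1 : ((2:ℝ)) • P - P = P := by module
    have e2 : (0 : Matrix (Fin n) (Fin n) ℝ) - P = (-1 : ℝ) • P := by module
    rw [e1] at h2P
    rw [e2, frobInner_smul_right] at h0
    linarith
  -- nonnegativity against PSD matrices
  have hpos : ∀ Y : Matrix (Fin n) (Fin n) ℝ, Y.PosSemidef →
      0 ≤ frobInner (P - Cmat A B u) Y := by
    intro Y hY
    have := proj_vi hproj (hCsymm u) hY
    rw [← hPdef, frobInner_sub_right, horth, sub_zero] at this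
    exact this
  have hXP : X = γ • P := hXdef
  have hXPSD : X.PosSemidef := by rw [hXP]; exact psd_smul hP hγ.le
  have hBX : ∀ i, frobInner (B i) X = γ * frobInner (B i) P := by
    intro i; rw [hXP, frobInner_smul_right]
  have hAX : frobInner A X = γ * frobInner A P := by rw [hXP, frobInner_smul_right]
  have hNX : frobNormSq X = γ ^ 2 * frobNormSq P := by rw [hXP, frobNormSq_smul]
  -- scalar consequences of orthogonality
  have hPP : frobNormSq P = -frobInner A P - ∑ i, u i * frobInner (B i) P := by
    have h1 : frobInner (P - Cmat A B u) P = frobInner P P - frobInner (Cmat A B u) P :=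
      frobInner_sub_left _ _ _
    have h2 : frobInner (Cmat A B u) P = -frobInner A P - ∑ i, u i * frobInner (B i) P := by
      have := hAZ u P; linarith
    rw [horth] at h1
    rw [frobNormSq_eq_inner]
    linarith
  -- complementary slackness in scalar form
  have hcs' : γ * ∑ i, u i * frobInner (B i) P = ∑ i, u i * b i := by
    have h1 : ∑ i, (u i * (γ * frobInner (B i) P) - u i * b i) = 0 := by
      rw [← hcs]
      refine Finset.sum_congr rfl fun i _ => ?_
      rw [hBX i]; ring
    rw [Finset.sum_sub_distrib] at h1
    rw [Finset.mul_sum]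
    have : ∀ i : Fin m, γ * (u i * frobInner (B i) P) = u i * (γ * frobInner (B i) P) := by
      intro i; ring
    rw [Finset.sum_congr rfl fun i _ => this i]
    linarith
  -- Part 1: d_γ(u) = p_γ(X)
  have hpart1 : dualObj A B b γ proj u = frobInner A X + (1 / (2 * γ)) * frobNormSq X := by
    unfold dualObj
    rw [← hPdef, hAX, hNX]
    have hγ' : γ ≠ 0 := ne_of_gt hγ
    have e : (1 / (2 * γ)) * (γ ^ 2 * frobNormSq P) = (γ / 2) * frobNormSq P := by
      field_simp
    rw [e]
    nlinarith [hPP, hcs']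
  refine ⟨hpart1, ?_, ?_⟩
  · -- Part 2: primal optimality
    intro Y hYpsd hYeq hYin
    have hsum : ∑ i, u i * (frobInner (B i) Y - b i) ≤ 0 := by
      refine Finset.sum_nonpos fun i _ => ?_
      have hi : i ∈ Ieq ∪ Iin := by rw [hunion]; trivial
      rcases hi with hi | hi
      · rw [hYeq i hi]; simp
      · exact mul_nonpos_of_nonneg_of_nonpos (hu i hi) (by linarith [hYin i hi])
    have h6 : ∑ i, u i * frobInner (B i) (Y - X) ≤ 0 := by
      have he : ∑ i, u i * frobInner (B i) (Y - X)
          = (∑ i, u i * (frobInner (B i) Y - b i)) - ∑ i, u i * (frobInner (B i) X - b i) := by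
        rw [← Finset.sum_sub_distrib]
        refine Finset.sum_congr rfl fun i _ => ?_
        rw [frobInner_sub_right]; ring
      rw [he, hcs, sub_zero]; exact hsum
    have h3' : 0 ≤ frobInner (P - Cmat A B u) (Y - X) := by
      have h4 : frobInner (P - Cmat A B u) X = 0 := by
        rw [hXP, frobInner_smul_right, horth, mul_zero]
      have h3 := hpos Y hYpsd
      rw [frobInner_sub_right, h4, sub_zero]; exact h3
    have hPC : frobInner (P - Cmat A B u) (Y - X)
        = frobInner P (Y - X) - frobInner (Cmat A B u) (Y - X) := frobInner_sub_left _ _ _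
    have hA' := hAZ u (Y - X)
    have hfin : 0 ≤ frobInner A (Y - X) + frobInner P (Y - X) := by linarith
    have h1 : 2 * γ * frobInner P (Y - X) ≤ frobNormSq Y - frobNormSq X := by
      have he : frobNormSq Y = frobNormSq (X + (Y - X)) := by rw [add_sub_cancel]
      rw [frobNormSq_add] at he
      have hXn : frobInner X (Y - X) = γ * frobInner P (Y - X) := by
        rw [hXP, frobInner_smul_left]
      nlinarith [frobNormSq_nonneg (Y - X), he, hXn]
    have hc : (1 / (2 * γ)) * (2 * γ * frobInner P (Y - X))
        ≤ (1 / (2 * γ)) * (frobNormSq Y - frobNormSq X) :=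
      mul_le_mul_of_nonneg_left h1 (by positivity)
    have he2 : (1 / (2 * γ)) * (2 * γ * frobInner P (Y - X)) = frobInner P (Y - X) := by
      field_simp
    have he3 : frobInner A (Y - X) = frobInner A Y - frobInner A X := frobInner_sub_right _ _ _
    rw [he2] at hc
    linarith
  · -- Part 3: dual optimality
    intro v hv
    rw [hpart1]
    set Q := proj (Cmat A B v) with hQdef
    have hQpos : 0 ≤ frobInner (Q - Cmat A B v) X := by
      obtain ⟨hQ, _⟩ := hproj _ (hCsymm v)
      have h0 := proj_vi hproj (hCsymm v) hXPSD
      rw [← hQdef] at h0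
      have horthv : frobInner (Q - Cmat A B v) Q = 0 := by
        have h2P := proj_vi hproj (hCsymm v) (psd_smul hQ (by norm_num : (0:ℝ) ≤ 2))
        have h00 := proj_vi hproj (hCsymm v) (psd_zero (n := n))
        rw [← hQdef] at h2P h00
        have e1 : ((2:ℝ)) • Q - Q = Q := by module
        have e2 : (0 : Matrix (Fin n) (Fin n) ℝ) - Q = (-1 : ℝ) • Q := by module
        rw [e1] at h2P
        rw [e2, frobInner_smul_right] at h00
        linarith
      rw [frobInner_sub_right, horthv, sub_zero] at h0
      exact h0
    have hsv : 0 ≤ ∑ i, v i * (b i - frobInner (B i) X) := by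
      refine Finset.sum_nonneg fun i _ => ?_
      have hi : i ∈ Ieq ∪ Iin := by rw [hunion]; trivial
      rcases hi with hi | hi
      · rw [heq i hi]; simp
      · exact mul_nonneg (hv i hi) (by linarith [hin i hi])
    have hsv' : ∑ i, v i * frobInner (B i) X ≤ ∑ i, v i * b i := by
      have : ∑ i, v i * (b i - frobInner (B i) X)
          = ∑ i, v i * b i - ∑ i, v i * frobInner (B i) X := by
        rw [← Finset.sum_sub_distrib]
        refine Finset.sum_congr rfl fun i _ => ?_; ring
      linarith [this ▸ hsv]
    have hAXv := hAZ v X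
    have hCvX : frobInner (Cmat A B v) X ≤ frobInner Q X := by
      rw [frobInner_sub_left] at hQpos; linarith
    have hquad : 0 ≤ frobNormSq X - 2 * γ * frobInner X Q + γ ^ 2 * frobNormSq Q := by
      have he : X - γ • Q = X + (-γ) • Q := by module
      have h0 := frobNormSq_nonneg (X - γ • Q)
      rw [he, frobNormSq_add, frobInner_smul_right, frobNormSq_smul] at h0
      nlinarith [h0]
    have hkey : 0 ≤ (1 / (2 * γ)) * (frobNormSq X - 2 * γ * frobInner X Q + γ ^ 2 * frobNormSq Q) :=
      mul_nonneg (by positivity) hquad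
    have hexp : (1 / (2 * γ)) * (frobNormSq X - 2 * γ * frobInner X Q + γ ^ 2 * frobNormSq Q)
        = (1 / (2 * γ)) * frobNormSq X - frobInner X Q + (γ / 2) * frobNormSq Q := by
      field_simp
    rw [hexp] at hkey
    have hcm : frobInner Q X = frobInner X Q := frobInner_comm _ _
    unfold dualObj
    rw [← hQdef]
    linarith
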